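/- Let n ≥ 1 be an integer and let p > 0, A > 0 be real numbers. Let a₁,…,aₙ ∈ [0,A] and let J ∈ ℝ satisfy |J| ≤ a₁⋯aₙ. Then |J·A^{p−n} − J·(a₁⋯aₙ)^{(p−n)/n}| ≤ |(n−p)/n|·A^p, where the term J·(a₁⋯aₙ)^{(p−n)/n} is interpreted as 0 when a₁⋯aₙ = 0 (which forces J = 0). -/

import Mathlib

open Finset

open Real in
/-- Key scalar inequality: for `0 < x ≤ 1` and `0 < s`, `|x - x ^ s| ≤ |1 - s|`. -/
lemma aux_abs_sub_rpow_le {x s : ℝ} (hx0 : 0 < x) (hx1 : x ≤ 1) (hs : 0 < s) :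
    |x - x ^ s| ≤ |1 - s| := by
  have hx1' : (-1 : ℝ) ≤ x - 1 := by linarith
  have hxx : (1 : ℝ) + (x - 1) = x := by ring
  rcases le_total s 1 with h1 | h1
  · -- x ≤ x^s ≤ 1 + s(x-1)
    have hb : x ^ s ≤ 1 + s * (x - 1) := by
      have := rpow_one_add_le_one_add_mul_self hx1' hs.le h1
      rwa [hxx] at this
    have hxs : x ≤ x ^ s := by
      calc x = x ^ (1 : ℝ) := (Real.rpow_one x).symm
        _ ≤ x ^ s := Real.rpow_le_rpow_of_exponent_ge hx0 hx1 h1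
    rw [abs_of_nonpos (by linarith), abs_of_nonneg (by linarith)]
    nlinarith
  · -- 1 + s(x-1) ≤ x^s ≤ x
    have hb : 1 + s * (x - 1) ≤ x ^ s := by
      have := one_add_mul_self_le_rpow_one_add hx1' h1
      rwa [hxx] at this
    have hxs : x ^ s ≤ x := by
      calc x ^ s ≤ x ^ (1 : ℝ) := Real.rpow_le_rpow_of_exponent_ge hx0 hx1 h1
        _ = x := Real.rpow_one x
    rw [abs_of_nonneg (by linarith), abs_of_nonpos (by linarith)]
    nlinarith

/-- If `a₁,…,aₙ ∈ [0,A]` and `|J| ≤ a₁⋯aₙ`, then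
`|J·A^{p−n} − J·(a₁⋯aₙ)^{(p−n)/n}| ≤ |(n−p)/n|·A^p` (real powers). -/
theorem abs_mul_rpow_sub_mul_rpow_le
    (n : ℕ) (hn : 1 ≤ n) (p A : ℝ) (hp : 0 < p) (hA : 0 < A)
    (a : Fin n → ℝ) (ha0 : ∀ i, 0 ≤ a i) (haA : ∀ i, a i ≤ A)
    (J : ℝ) (hJ : |J| ≤ ∏ i : Fin n, a i) :
    |J * A ^ (p - n) - J * (∏ i : Fin n, a i) ^ ((p - n) / n)| ≤
      |((n : ℝ) - p) / n| * A ^ p := by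
  set P : ℝ := ∏ i : Fin n, a i with hP
  have hn0 : (0 : ℝ) < n := by exact_mod_cast hn
  have hP0 : 0 ≤ P := Finset.prod_nonneg fun i _ => ha0 i
  have hRHS0 : 0 ≤ |((n : ℝ) - p) / n| * A ^ p :=
    mul_nonneg (abs_nonneg _) (Real.rpow_pos_of_pos hA p).le
  rcases eq_or_lt_of_le hP0 with hP0' | hP0'
  · have hJ0 : J = 0 := abs_eq_zero.mp (le_antisymm (hJ.trans_eq hP0'.symm) (abs_nonneg J))
    simp [hJ0, hRHS0]
  · -- P > 0
    have hPA : P ≤ A ^ (n : ℝ) := by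
      rw [Real.rpow_natCast]
      calc P ≤ ∏ _i : Fin n, A := Finset.prod_le_prod (fun i _ => ha0 i) (fun i _ => haA i)
        _ = A ^ n := by simp
    have hAn : (0 : ℝ) < A ^ (n : ℝ) := Real.rpow_pos_of_pos hA _
    set x : ℝ := P / A ^ (n : ℝ) with hx
    have hx0 : 0 < x := div_pos hP0' hAn
    have hx1 : x ≤ 1 := (div_le_one hAn).mpr hPA
    have hs : (0 : ℝ) < p / n := div_pos hp hn0
    have key : |x - x ^ (p / n)| ≤ |1 - p / n| := aux_abs_sub_rpow_le hx0 hx1 hs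
    -- rewrite everything
    have hPx : P = x * A ^ (n : ℝ) := by rw [hx, div_mul_cancel₀ _ hAn.ne']
    have hPr : P ^ ((p - n) / n) = x ^ ((p - n) / n) * A ^ (p - n) := by
      rw [hPx, Real.mul_rpow hx0.le hAn.le, ← Real.rpow_mul hA.le]
      congr 2
      field_simp
    have habs : |J * A ^ (p - n) - J * P ^ ((p - n) / n)| ≤ P * |A ^ (p - n) - P ^ ((p - n) / n)| := by
      calc |J * A ^ (p - n) - J * P ^ ((p - n) / n)|
          = |J| * |A ^ (p - n) - P ^ ((p - n) / n)| := by
            rw [← abs_mul, mul_sub]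
        _ ≤ P * |A ^ (p - n) - P ^ ((p - n) / n)| :=
            mul_le_mul_of_nonneg_right hJ (abs_nonneg _)
    have hmain : P * |A ^ (p - n) - P ^ ((p - n) / n)| = A ^ p * |x - x ^ (p / n)| := by
      rw [hPr, ← abs_of_pos hP0', ← abs_mul, ← abs_of_pos (Real.rpow_pos_of_pos hA p), ← abs_mul]
      congr 1
      rw [hPx]
      have h1 : x * A ^ (n : ℝ) * (A ^ (p - n)) = x * A ^ p := by
        rw [mul_assoc, ← Real.rpow_add hA]
        ring_nf
      have h2 : x * A ^ (n : ℝ) * (x ^ ((p - n) / n) * A ^ (p - n)) = x ^ (p / n) * A ^ p := by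
        have : x * x ^ ((p - n) / n) = x ^ (p / n) := by
          have he : p / (n:ℝ) = 1 + (p - n) / n := by field_simp; ring
          rw [he, Real.rpow_add hx0, Real.rpow_one]
        calc x * A ^ (n : ℝ) * (x ^ ((p - n) / n) * A ^ (p - n))
            = (x * x ^ ((p - n) / n)) * (A ^ (n : ℝ) * A ^ (p - n)) := by ring
          _ = x ^ (p / n) * A ^ p := by
              rw [this, ← Real.rpow_add hA]; ring_nf
      rw [mul_sub, h1, h2]
      ring
    have hfinal : |1 - p / n| = |((n : ℝ) - p) / n| := by
      congr 1
      field_simp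
    calc |J * A ^ (p - n) - J * P ^ ((p - n) / n)|
        ≤ A ^ p * |x - x ^ (p / n)| := by rw [← hmain]; exact habs
      _ ≤ A ^ p * |1 - p / n| := mul_le_mul_of_nonneg_left key (Real.rpow_pos_of_pos hA p).le
      _ = |((n : ℝ) - p) / n| * A ^ p := by rw [hfinal]; ring
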